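/- Let h(m_t) = K P_s / (m + (β-1) m_t) - α m / (2 m_t P_s) for real m_t > 0, with constants K, P_s, α, m > 0 and β > 1. Then h is maximized at m_t* = m√(αm) / (√(2K(β-1)) P_s - √(αm)(β-1)), provided √(2K(β-1)) P_s > √(αm)(β-1). -/

import Mathlib

/-- `h(m_t) = K P_s/(m + (β-1)m_t) - α m/(2 m_t P_s)` is maximized over
`m_t > 0` at `m_t* = m√(αm)/(√(2K(β-1)) P_s - √(αm)(β-1))`. -/
theorem stmt_7 (K Ps α m β : ℝ) (hK : 0 < K) (hPs : 0 < Ps) (hα : 0 < α)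
    (hm : 0 < m) (hβ : 1 < β)
    (hpos : Real.sqrt (α * m) * (β - 1) < Real.sqrt (2 * K * (β - 1)) * Ps)
    (h : ℝ → ℝ)
    (hh : ∀ x, h x = K * Ps / (m + (β - 1) * x) - α * m / (2 * x * Ps)) :
    ∀ x : ℝ, 0 < x →
      h x ≤ h (m * Real.sqrt (α * m) /
        (Real.sqrt (2 * K * (β - 1)) * Ps - Real.sqrt (α * m) * (β - 1))) := by
  intro x hx
  have hc : (0:ℝ) < β - 1 := by linarith
  set a := Real.sqrt (α * m) with ha_def
  set b := Real.sqrt (2 * K * (β - 1)) with hb_def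
  have ha2 : a ^ 2 = α * m := Real.sq_sqrt (by positivity)
  have hb2 : b ^ 2 = 2 * K * (β - 1) := Real.sq_sqrt (by positivity)
  have ha : 0 < a := Real.sqrt_pos.mpr (by positivity)
  have hd : 0 < b * Ps - a * (β - 1) := by linarith
  have hK' : K = b ^ 2 / (2 * (β - 1)) := by
    field_simp
    linarith [hb2]
  have hX : 0 < m * a / (b * Ps - a * (β - 1)) := by positivity
  have hmx : 0 < m + (β - 1) * x := by positivity
  have hmX : 0 < m + (β - 1) * (m * a / (b * Ps - a * (β - 1))) := by positivity
  have key : h (m * a / (b * Ps - a * (β - 1))) - h x =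
      ((b * Ps - a * (β - 1)) * x - a * m) ^ 2 /
        (2 * Ps * m * x * (m + (β - 1) * x)) := by
    rw [hh, hh, hK', ← ha2]
    have h1 : (b * Ps - a * (β - 1)) ≠ 0 := ne_of_gt hd
    have h2 : x ≠ 0 := ne_of_gt hx
    have h3 : (m + (β - 1) * x) ≠ 0 := ne_of_gt hmx
    have h4 : (m + (β - 1) * (m * a / (b * Ps - a * (β - 1)))) ≠ 0 := ne_of_gt hmX
    have h5 : Ps ≠ 0 := ne_of_gt hPs
    have h6 : (β - 1) ≠ 0 := ne_of_gt hc
    have h7 : m ≠ 0 := ne_of_gt hm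
    have h9 : b ≠ 0 := by
      intro h0
      rw [h0] at hd
      nlinarith
    have h8 : m + (β - 1) * (m * a / (b * Ps - a * (β - 1))) =
        m * b * Ps / (b * Ps - a * (β - 1)) := by
      rw [eq_div_iff h1, add_mul, mul_assoc (β - 1), div_mul_cancel₀ _ h1]
      ring
    rw [h8]
    field_simp
    ring
  have hnn : 0 ≤ ((b * Ps - a * (β - 1)) * x - a * m) ^ 2 /
      (2 * Ps * m * x * (m + (β - 1) * x)) := by positivity
  linarith [key, hnn]
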